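/- Let $\theta_l, \theta_r > 0$ with $\theta_r > 4\theta_l$, let $\rho_l = \frac{2\sqrt{\theta_r}}{\sqrt{\theta_l}+\sqrt{\theta_r}}$, $\rho_r = \frac{2\sqrt{\theta_l}}{\sqrt{\theta_l}+\sqrt{\theta_r}}$, and let $f(c) = \frac{\rho_l}{\sqrt{2\pi\theta_l}} e^{-c^2/(2\theta_l)}$ for $c > 0$, $f(c) = \frac{\rho_r}{\sqrt{2\pi\theta_r}} e^{-c^2/(2\theta_r)}$ for $c < 0$. Then, with $\theta = \sqrt{\theta_l\theta_r}$ the temperature of $f$, we have $2\theta < \theta_r$ and $\int_{\mathbb{R}} f(c)^2 \exp\!\big(\tfrac{c^2}{2\theta}\big)\,dc = \infty$; i.e., the Grad expansion of the free-molecular solution around its local Maxwellian diverges whenever the wall temperature ratio exceeds $4$. -/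

import Mathlib

open MeasureTheory ENNReal

/-- **Divergence of the Grad expansion in the free-molecular Fourier problem.** If the wall
temperature ratio exceeds `4` (`θ_r > 4θ_l`), then the temperature `θ = √(θ_l θ_r)` of the
free-molecular solution satisfies `2θ < θ_r`, and the Grad expansion of the solution around
its local Maxwellian diverges: `∫ f² exp(c²/(2θ)) dc = ∞`. -/
theorem free_molecular_grad_divergence
    (θl θr : ℝ) (hθl : 0 < θl) (hθr : 4 * θl < θr)
    (ρl ρr : ℝ)
    (hρl : ρl = 2 * Real.sqrt θr / (Real.sqrt θl + Real.sqrt θr))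
    (hρr : ρr = 2 * Real.sqrt θl / (Real.sqrt θl + Real.sqrt θr))
    (f : ℝ → ℝ)
    (hfp : ∀ c : ℝ, 0 < c →
        f c = ρl / Real.sqrt (2 * Real.pi * θl) * Real.exp (-c ^ 2 / (2 * θl)))
    (hfn : ∀ c : ℝ, c < 0 →
        f c = ρr / Real.sqrt (2 * Real.pi * θr) * Real.exp (-c ^ 2 / (2 * θr))) :
    2 * Real.sqrt (θl * θr) < θr ∧
    (∫⁻ c : ℝ, ENNReal.ofReal
        (f c ^ 2 * Real.exp (c ^ 2 / (2 * Real.sqrt (θl * θr))))) = ⊤ := by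
  have hθr0 : 0 < θr := by nlinarith
  set θ := Real.sqrt (θl * θr) with hθdef
  have hθpos : 0 < θ := Real.sqrt_pos.2 (by positivity)
  have hθsq : θ ^ 2 = θl * θr := Real.sq_sqrt (by positivity)
  have h1 : 2 * θ < θr := by nlinarith [hθpos, hθsq]
  refine ⟨h1, ?_⟩
  -- the constant lower bound on (-∞, 0)
  have hρrpos : 0 < ρr := by
    rw [hρr]
    have h1' : 0 < Real.sqrt θl := Real.sqrt_pos.2 hθl
    have h2' : 0 < Real.sqrt θr := Real.sqrt_pos.2 hθr0
    positivity
  set K : ℝ := ρr ^ 2 / (2 * Real.pi * θr) with hKdef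
  have hKpos : 0 < K := by
    have := Real.pi_pos
    positivity
  have hbound : ∀ c : ℝ, c < 0 → K ≤ f c ^ 2 * Real.exp (c ^ 2 / (2 * θ)) := by
    intro c hc
    rw [hfn c hc]
    have hsq : Real.sqrt (2 * Real.pi * θr) ^ 2 = 2 * Real.pi * θr :=
      Real.sq_sqrt (by positivity)
    have hEq : (ρr / Real.sqrt (2 * Real.pi * θr) * Real.exp (-c ^ 2 / (2 * θr))) ^ 2
        * Real.exp (c ^ 2 / (2 * θ))
        = K * Real.exp (-c ^ 2 / θr + c ^ 2 / (2 * θ)) := by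
      rw [mul_pow, div_pow, hsq, ← Real.exp_nat_mul, mul_assoc, ← Real.exp_add]
      rw [hKdef]
      ring_nf
    rw [hEq]
    have hexp : (1:ℝ) ≤ Real.exp (-c ^ 2 / θr + c ^ 2 / (2 * θ)) := by
      rw [← Real.exp_zero]
      apply Real.exp_le_exp.2
      have hc2 : 0 ≤ c ^ 2 := sq_nonneg c
      rw [div_add_div _ _ (ne_of_gt hθr0) (by positivity : (2*θ:ℝ) ≠ 0)]
      apply div_nonneg _ (by positivity)
      nlinarith
    nlinarith
  rw [eq_top_iff]
  calc (⊤ : ℝ≥0∞) = ENNReal.ofReal K * volume (Set.Iio (0:ℝ)) := by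
        rw [Real.volume_Iio, ENNReal.mul_top]
        simp [ENNReal.ofReal_eq_zero, not_le, hKpos]
    _ = ∫⁻ _ in Set.Iio (0:ℝ), ENNReal.ofReal K := by rw [setLIntegral_const]
    _ ≤ ∫⁻ c in Set.Iio (0:ℝ), ENNReal.ofReal
          (f c ^ 2 * Real.exp (c ^ 2 / (2 * θ))) := by
        apply setLIntegral_mono' measurableSet_Iio
        intro c hc
        exact ENNReal.ofReal_le_ofReal (hbound c hc)
    _ ≤ ∫⁻ c : ℝ, ENNReal.ofReal (f c ^ 2 * Real.exp (c ^ 2 / (2 * θ))) :=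
        setLIntegral_le_lintegral _ _
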